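/- (A priori bound on the Lagrange multiplier.) Suppose there exist a 1-form λ̃ on T*M̃, δ > 0, and a constant D < ∞ with λ̃(X_{H̃}(x)) ≥ 2δ for all x with H̃(x) ∈ [k−δ, k+δ] and |λ̃| ≤ D on this region. Then for every loop (x,η) ∈ Λ_α T*M × ℝ with x(S¹) ⊆ H⁻¹([k−δ,k+δ]) one has |η| ≤ (1/δ)|A_{H−k}(x,η)| + (D/δ)‖∇A_{H−k}(x,η)‖_J + (1/δ)|I(α,θ)|, where I(α,θ) is the θ-integral over the (reversed) lifted reference loop of the class α. -/

import Mathlib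

open MeasureTheory

/-!
STATEMENT 10 (A priori bound on the Lagrange multiplier): Suppose there exist a 1-form `λ̃` on
`T*M̃`, `δ > 0` and `D < ∞` with `λ̃(X_{H̃}(x)) ≥ 2δ` for all `x` with `H̃(x) ∈ [k−δ, k+δ]` and
`|λ̃| ≤ D` on this region.  Then for every loop `(x,η) ∈ Λ_α T*M × ℝ` with
`x(S¹) ⊆ H⁻¹([k−δ,k+δ])` one has
`|η| ≤ (1/δ)|A_{H−k}(x,η)| + (D/δ)‖∇A_{H−k}(x,η)‖_J + (1/δ)|I(α,θ)|`.

The lifted phase space `T*M̃` is modeled by a normed space `P`; the loop `x` is presented by its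
lift `x̃ : [0,1] → T*M̃` (a `C¹` path, written `x`), so that
`A_{H−k}(x,η) = ∫₀¹ λ̃(ẋ̃) dt + I(α,θ) − η ∫₀¹ (H(x)−k) dt`, where `I(α,θ)` is the `θ`-integral
over the (reversed) lifted reference loop of the free homotopy class `α`.  The gradient norm
`‖∇A_{H−k}(x,η)‖_J` (denoted `gnorm`) controls `∫₀¹ |ẋ − η X_H(x)| dt`, as recorded in
hypothesis `hg`.
-/
theorem lagrange_multiplier_bound
    {P : Type*} [NormedAddCommGroup P] [NormedSpace ℝ P]
    (lam : P → P →L[ℝ] ℝ) (hlam : Continuous lam)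
    (XH : P → P) (hXH : Continuous XH) (H : P → ℝ) (hH : Continuous H)
    (k δ D Iα : ℝ) (hδ : 0 < δ)
    (hcontact : ∀ y, H y ∈ Set.Icc (k - δ) (k + δ) → 2 * δ ≤ lam y (XH y))
    (hD : ∀ y, H y ∈ Set.Icc (k - δ) (k + δ) → ‖lam y‖ ≤ D)
    (x : ℝ → P) (η : ℝ) (hx : ContDiff ℝ 1 x)
    (hrange : ∀ t ∈ Set.Icc (0:ℝ) 1, H (x t) ∈ Set.Icc (k - δ) (k + δ))
    (gnorm : ℝ)
    (hg : (∫ t in (0:ℝ)..1, ‖deriv x t - η • XH (x t)‖) ≤ gnorm) :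
    |η| ≤ (1 / δ) * |(∫ t in (0:ℝ)..1, lam (x t) (deriv x t)) + Iα
            - η * ∫ t in (0:ℝ)..1, (H (x t) - k)|
          + (D / δ) * gnorm + (1 / δ) * |Iα| := by
  have h01 : (0:ℝ) ≤ 1 := zero_le_one
  have hxc : Continuous x := hx.continuous
  have hdc : Continuous (deriv x) := hx.continuous_deriv le_rfl
  have hlc : Continuous fun t => lam (x t) := hlam.comp hxc
  have hfc : Continuous fun t => (lam (x t)) (deriv x t) := hlc.clm_apply hdc
  have hgc2 : Continuous fun t => (lam (x t)) (XH (x t)) := hlc.clm_apply (hXH.comp hxc)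
  have hvc : Continuous fun t => deriv x t - η • XH (x t) :=
    hdc.sub ((hXH.comp hxc).const_smul η)
  have hhc : Continuous fun t => (lam (x t)) (deriv x t - η • XH (x t)) := hlc.clm_apply hvc
  set A : ℝ := ∫ t in (0:ℝ)..1, (lam (x t)) (deriv x t) with hA
  set G : ℝ := ∫ t in (0:ℝ)..1, (lam (x t)) (XH (x t)) with hG
  set Hh : ℝ := ∫ t in (0:ℝ)..1, (lam (x t)) (deriv x t - η • XH (x t)) with hHh
  set E : ℝ := ∫ t in (0:ℝ)..1, (H (x t) - k) with hE
  have hD0 : 0 ≤ D := le_trans (norm_nonneg _) (hD (x 0) (hrange 0 ⟨le_rfl, h01⟩))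
  -- A = Hh + η * G
  have hsplit : A = Hh + η * G := by
    have : ∀ t, (lam (x t)) (deriv x t)
        = (lam (x t)) (deriv x t - η • XH (x t)) + η * (lam (x t)) (XH (x t)) := by
      intro t
      have := (lam (x t)).map_sub (deriv x t) (η • XH (x t))
      simp [this, (lam (x t)).map_smul, smul_eq_mul]
    calc A = ∫ t in (0:ℝ)..1, ((lam (x t)) (deriv x t - η • XH (x t))
              + η * (lam (x t)) (XH (x t))) := by
            rw [hA]; exact intervalIntegral.integral_congr fun t _ => this t
      _ = Hh + η * G := by
            rw [intervalIntegral.integral_add (g := fun t => η * (lam (x t)) (XH (x t))) (hhc.intervalIntegrable 0 1)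
              ((continuous_const.mul hgc2).intervalIntegrable 0 1), hHh, hG,
              intervalIntegral.integral_const_mul]
  -- G ≥ 2δ
  have hGlb : 2 * δ ≤ G := by
    have h := intervalIntegral.integral_mono_on (μ := MeasureTheory.volume) (f := fun _ : ℝ => 2 * δ) h01 (continuous_const.intervalIntegrable 0 1)
      (hgc2.intervalIntegrable 0 1) (fun t ht => hcontact (x t) (hrange t ht))
    simpa [hG] using h
  -- |Hh| ≤ D * gnorm
  have hHhb : |Hh| ≤ D * gnorm := by
    have h1 : |Hh| ≤ ∫ t in (0:ℝ)..1, ‖(lam (x t)) (deriv x t - η • XH (x t))‖ := by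
      simpa [hHh] using
        intervalIntegral.norm_integral_le_integral_norm (f := fun t =>
          (lam (x t)) (deriv x t - η • XH (x t))) h01
    have h2 : (∫ t in (0:ℝ)..1, ‖(lam (x t)) (deriv x t - η • XH (x t))‖)
        ≤ ∫ t in (0:ℝ)..1, D * ‖deriv x t - η • XH (x t)‖ := by
      apply intervalIntegral.integral_mono_on h01 (hhc.norm.intervalIntegrable 0 1)
        ((continuous_const.mul hvc.norm).intervalIntegrable 0 1)
      intro t ht
      calc ‖(lam (x t)) (deriv x t - η • XH (x t))‖
          ≤ ‖lam (x t)‖ * ‖deriv x t - η • XH (x t)‖ := (lam (x t)).le_opNorm _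
        _ ≤ D * ‖deriv x t - η • XH (x t)‖ :=
            mul_le_mul_of_nonneg_right (hD _ (hrange t ht)) (norm_nonneg _)
    have h3 : (∫ t in (0:ℝ)..1, D * ‖deriv x t - η • XH (x t)‖) ≤ D * gnorm := by
      rw [intervalIntegral.integral_const_mul]
      exact mul_le_mul_of_nonneg_left hg hD0
    linarith
  -- |E| ≤ δ
  have hEb : |E| ≤ δ := by
    have h1 : |E| ≤ ∫ t in (0:ℝ)..1, ‖H (x t) - k‖ := by
      simpa [hE] using
        intervalIntegral.norm_integral_le_integral_norm (f := fun t => H (x t) - k) h01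
    have h2 : (∫ t in (0:ℝ)..1, ‖H (x t) - k‖) ≤ ∫ t in (0:ℝ)..1, δ := by
      apply intervalIntegral.integral_mono_on h01
        (((hH.comp hxc).sub continuous_const).norm.intervalIntegrable 0 1)
        intervalIntegrable_const
      intro t ht
      have := hrange t ht
      simp only [Pi.sub_apply, Function.comp_apply, Real.norm_eq_abs, abs_le]
      constructor <;> [linarith [this.1]; linarith [this.2]]
    simp only [intervalIntegral.integral_const, smul_eq_mul, sub_zero, one_mul] at h2
    linarith
  -- combine
  set B : ℝ := |A + Iα - η * E| with hB
  have key : 2 * δ * |η| ≤ B + |Iα| + δ * |η| + D * gnorm := by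
    have h1 : 2 * δ * |η| ≤ |η| * G := by
      rcases abs_nonneg η with h
      nlinarith
    have h2 : |η| * G = |η * G| := by
      rw [abs_mul, abs_of_nonneg (by linarith : (0:ℝ) ≤ G)]
    have h3 : |η * G| ≤ |A| + |Hh| := by
      have : η * G = A - Hh := by linarith [hsplit]
      rw [this]; exact abs_sub _ _
    have h4 : |A| ≤ B + |Iα| + |η| * δ := by
      have : A = (A + Iα - η * E) - Iα + η * E := by ring
      calc |A| = |(A + Iα - η * E) - Iα + η * E| := by rw [← this]
        _ ≤ |(A + Iα - η * E) - Iα| + |η * E| := abs_add_le _ _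
        _ ≤ |A + Iα - η * E| + |Iα| + |η * E| := by
              have := abs_sub (A + Iα - η * E) Iα; linarith
        _ ≤ B + |Iα| + |η| * δ := by
              rw [abs_mul]
              have := mul_le_mul_of_nonneg_left hEb (abs_nonneg η)
              simp [hB]; linarith
    linarith
  have : |η| * δ ≤ B + D * gnorm + |Iα| := by nlinarith [abs_nonneg η]
  calc |η| ≤ (B + D * gnorm + |Iα|) / δ := (le_div_iff₀ hδ).mpr this
    _ = (1/δ) * B + (D/δ) * gnorm + (1/δ) * |Iα| := by ring
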